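/- arXiv:2001.04184 — 2 statements merged into one kernel-verified Lean document; each statement's English description precedes it below -/
import Mathlib

section
/- The rational filter r_{β,z} is a real rational function of order (4m−1, 4m): the polynomial q(X) = ∏_{i=1}^m (X − z_i)(X − conj(z_i))(X + z_i)(X + conj(z_i)) has real coefficients, is monic of degree 4m, and has no real roots, and there exists a polynomial p with real coefficients of degree at most 4m − 1 such that q(x)·r_{β,z}(x) = p(x) for every real x. -/
open Complex ComplexConjugate Polynomial

/-- The rational filter `r_{β,z}` of the SLiSe framework. -/
noncomputable def ratFilter (m : ℕ) (β z : Fin m → ℂ) (x : ℝ) : ℂ :=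
  ∑ i : Fin m,
    (β i / ((x : ℂ) - z i) + conj (β i) / ((x : ℂ) - conj (z i))
      - β i / ((x : ℂ) + z i) - conj (β i) / ((x : ℂ) + conj (z i)))

/-- The denominator polynomial `q(X) = ∏ᵢ (X − zᵢ)(X − conj zᵢ)(X + zᵢ)(X + conj zᵢ)`. -/
noncomputable def denomPoly (m : ℕ) (z : Fin m → ℂ) : Polynomial ℂ :=
  ∏ i : Fin m,
    ((X - C (z i)) * (X - C (conj (z i))) * (X + C (z i)) * (X + C (conj (z i))))

namespace RatAux

noncomputable def quart (w : ℂ) : Polynomial ℂ :=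
  (X - C w) * (X - C (conj w)) * (X + C w) * (X + C (conj w))

lemma denomPoly_eq (m : ℕ) (z : Fin m → ℂ) : denomPoly m z = ∏ i : Fin m, quart (z i) := rfl

lemma quart_monic (w : ℂ) : (quart w).Monic :=
  (((monic_X_sub_C w).mul (monic_X_sub_C _)).mul (monic_X_add_C _)).mul (monic_X_add_C _)

lemma quart_natDegree (w : ℂ) : (quart w).natDegree = 4 := by
  unfold quart
  rw [Monic.natDegree_mul (((monic_X_sub_C w).mul (monic_X_sub_C _)).mul (monic_X_add_C _))
      (monic_X_add_C _),
    Monic.natDegree_mul ((monic_X_sub_C w).mul (monic_X_sub_C _)) (monic_X_add_C _),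
    Monic.natDegree_mul (monic_X_sub_C w) (monic_X_sub_C _),
    natDegree_X_sub_C, natDegree_X_add_C]
  simp [natDegree_X_sub_C, natDegree_X_add_C]

lemma quart_conj (w : ℂ) : (quart w).map (starRingEnd ℂ) = quart w := by
  unfold quart
  simp only [Polynomial.map_mul, Polynomial.map_sub, Polynomial.map_add, map_X, map_C,
    Complex.conj_conj]
  ring

lemma sub_ne (w : ℂ) (h : w.im ≠ 0) (x : ℝ) : (x : ℂ) - w ≠ 0 := by
  intro hc
  apply h
  have := congrArg Complex.im hc
  simpa using this

lemma add_ne (w : ℂ) (h : w.im ≠ 0) (x : ℝ) : (x : ℂ) + w ≠ 0 := by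
  intro hc
  apply h
  have := congrArg Complex.im hc
  simpa using this

lemma quart_eval_ne (w : ℂ) (h : w.im ≠ 0) (x : ℝ) : (quart w).eval (x : ℂ) ≠ 0 := by
  have h' : (conj w).im ≠ 0 := by simpa using h
  unfold quart
  simp only [eval_mul, eval_sub, eval_add, eval_X, eval_C]
  exact mul_ne_zero (mul_ne_zero (mul_ne_zero (sub_ne w h x) (sub_ne _ h' x))
    (add_ne w h x)) (add_ne _ h' x)

variable {m : ℕ} (z : Fin m → ℂ)

noncomputable def gp (i : Fin m) (a b c : ℂ) : Polynomial ℂ :=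
  (X - C a) * (X - C b) * (X - C c) * ∏ j ∈ Finset.univ.erase i, quart (z j)

lemma gp_monic (i : Fin m) (a b c : ℂ) : (gp z i a b c).Monic :=
  (((monic_X_sub_C a).mul (monic_X_sub_C b)).mul (monic_X_sub_C c)).mul
    (monic_prod_of_monic _ _ fun j _ => quart_monic (z j))

lemma gp_natDegree (i : Fin m) (a b c : ℂ) : (gp z i a b c).natDegree = 4 * m - 1 := by
  have hm : (((X - C a) * (X - C b) * (X - C c)) : Polynomial ℂ).Monic :=
    ((monic_X_sub_C a).mul (monic_X_sub_C b)).mul (monic_X_sub_C c)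
  have hp : (∏ j ∈ Finset.univ.erase i, quart (z j)).Monic :=
    monic_prod_of_monic _ _ fun j _ => quart_monic (z j)
  have h3 : (((X - C a) * (X - C b) * (X - C c)) : Polynomial ℂ).natDegree = 3 := by
    rw [Monic.natDegree_mul ((monic_X_sub_C a).mul (monic_X_sub_C b)) (monic_X_sub_C c),
      Monic.natDegree_mul (monic_X_sub_C a) (monic_X_sub_C b), natDegree_X_sub_C]
    simp [natDegree_X_sub_C]
  have hpn : (∏ j ∈ Finset.univ.erase i, quart (z j)).natDegree = 4 * (m - 1) := by
    rw [natDegree_prod _ _ fun j _ => (quart_monic (z j)).ne_zero]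
    simp [quart_natDegree, Finset.card_erase_of_mem]
    ring
  have hm1 : 1 ≤ m := i.pos
  rw [gp, Monic.natDegree_mul hm hp, h3, hpn]
  omega

lemma gp_swap (i : Fin m) (a b c : ℂ) : gp z i a b c = gp z i a c b := by
  unfold gp; ring

lemma gp_conj (i : Fin m) (a b c : ℂ) :
    (gp z i a b c).map (starRingEnd ℂ) = gp z i (conj a) (conj b) (conj c) := by
  unfold gp
  simp only [Polynomial.map_mul, Polynomial.map_sub, map_X, map_C, Polynomial.map_prod, quart_conj]

lemma mul_gp (i : Fin m) {a b c d : ℂ}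
    (h : (X - C d) * ((X - C a) * (X - C b) * (X - C c)) = quart (z i)) :
    (X - C d) * gp z i a b c = denomPoly m z := by
  rw [denomPoly_eq, ← Finset.mul_prod_erase Finset.univ _ (Finset.mem_univ i), ← h, gp]
  ring

noncomputable def g1 (i : Fin m) : Polynomial ℂ := gp z i (conj (z i)) (-(z i)) (-(conj (z i)))
noncomputable def g2 (i : Fin m) : Polynomial ℂ := gp z i (z i) (-(z i)) (-(conj (z i)))
noncomputable def g3 (i : Fin m) : Polynomial ℂ := gp z i (z i) (conj (z i)) (-(conj (z i)))
noncomputable def g4 (i : Fin m) : Polynomial ℂ := gp z i (z i) (conj (z i)) (-(z i))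

lemma hq1 (i : Fin m) : (X - C (z i)) * g1 z i = denomPoly m z :=
  mul_gp z i (by unfold quart; simp only [map_neg]; ring)

lemma hq2 (i : Fin m) : (X - C (conj (z i))) * g2 z i = denomPoly m z :=
  mul_gp z i (by unfold quart; simp only [map_neg]; ring)

lemma hq3 (i : Fin m) : (X + C (z i)) * g3 z i = denomPoly m z := by
  have : (X + C (z i)) = X - C (-(z i)) := by simp only [map_neg, sub_neg_eq_add]
  rw [this]
  exact mul_gp z i (by unfold quart; simp only [map_neg]; ring)

lemma hq4 (i : Fin m) : (X + C (conj (z i))) * g4 z i = denomPoly m z := by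
  have : (X + C (conj (z i))) = X - C (-(conj (z i))) := by simp only [map_neg, sub_neg_eq_add]
  rw [this]
  exact mul_gp z i (by unfold quart; simp only [map_neg]; ring)

noncomputable def numer (β : Fin m → ℂ) : Polynomial ℂ :=
  ∑ i : Fin m,
    (C (β i) * g1 z i + C (conj (β i)) * g2 z i - C (β i) * g3 z i - C (conj (β i)) * g4 z i)

lemma numer_conj (β : Fin m → ℂ) : (numer z β).map (starRingEnd ℂ) = numer z β := by
  unfold numer
  rw [Polynomial.map_sum]
  refine Finset.sum_congr rfl fun i _ => ?_
  simp only [Polynomial.map_sub, Polynomial.map_add, Polynomial.map_mul, map_C, g1, g2, g3, g4,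
    gp_conj, Complex.conj_conj, map_neg]
  rw [show gp z i (z i) (-(conj (z i))) (-(z i)) = gp z i (z i) (-(z i)) (-(conj (z i))) from by
      unfold gp; ring,
    show gp z i (conj (z i)) (-(conj (z i))) (-(z i))
        = gp z i (conj (z i)) (-(z i)) (-(conj (z i))) from by unfold gp; ring,
    show gp z i (conj (z i)) (z i) (-(z i)) = gp z i (z i) (conj (z i)) (-(z i)) from by
      unfold gp; ring,
    show gp z i (conj (z i)) (z i) (-(conj (z i))) = gp z i (z i) (conj (z i)) (-(conj (z i)))
      from by unfold gp; ring]
  ring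

end RatAux

open RatAux in
/-- `r_{β,z}` is a real rational function of order `(4m−1, 4m)`: the polynomial
`q(X) = ∏ᵢ (X − zᵢ)(X − conj zᵢ)(X + zᵢ)(X + conj zᵢ)` has real coefficients, is monic of
degree `4m`, has no real roots, and there is a real polynomial `p` of degree at most `4m − 1`
with `q(x)·r_{β,z}(x) = p(x)` for all real `x`. -/
theorem ratFilter_is_rational (m : ℕ) (β z : Fin m → ℂ) (hz : ∀ i, (z i).im ≠ 0) :
    (∀ n : ℕ, ((denomPoly m z).coeff n).im = 0) ∧
    (denomPoly m z).Monic ∧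
    (denomPoly m z).natDegree = 4 * m ∧
    (∀ x : ℝ, (denomPoly m z).eval (x : ℂ) ≠ 0) ∧
    ∃ p : Polynomial ℝ, p.degree < (4 * m : ℕ) ∧
      ∀ x : ℝ, (denomPoly m z).eval (x : ℂ) * ratFilter m β z x = ((p.eval x : ℝ) : ℂ) := by
  have hconj : (denomPoly m z).map (starRingEnd ℂ) = denomPoly m z := by
    rw [denomPoly_eq, Polynomial.map_prod]
    exact Finset.prod_congr rfl fun i _ => quart_conj (z i)
  refine ⟨?_, ?_, ?_, ?_, ?_⟩
  · intro n
    have : conj ((denomPoly m z).coeff n) = (denomPoly m z).coeff n := by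
      conv_rhs => rw [← hconj]
      rw [coeff_map]
    rw [← Complex.conj_eq_iff_im]
    exact this
  · exact monic_prod_of_monic _ _ fun i _ => quart_monic (z i)
  · rw [denomPoly_eq, natDegree_prod _ _ fun i _ => (quart_monic (z i)).ne_zero]
    simp [quart_natDegree, mul_comm]
  · intro x
    rw [denomPoly_eq]
    simp only [eval_prod]
    exact Finset.prod_ne_zero_iff.2 fun i _ => quart_eval_ne (z i) (hz i) x
  · -- main part
    have hnum_conj := numer_conj z β
    have hlift : numer z β ∈ Polynomial.lifts (algebraMap ℝ ℂ) := by
      rw [Polynomial.lifts_iff_coeff_lifts]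
      intro n
      have : conj ((numer z β).coeff n) = (numer z β).coeff n := by
        conv_rhs => rw [← hnum_conj]; rw [coeff_map]
      refine ⟨((numer z β).coeff n).re, ?_⟩
      have him : ((numer z β).coeff n).im = 0 := Complex.conj_eq_iff_im.mp this
      simp [Complex.ext_iff, him]
    obtain ⟨p, hp_map, hp_deg⟩ := Polynomial.mem_lifts_and_degree_eq hlift
    refine ⟨p, ?_, ?_⟩
    · rw [hp_deg]
      have hterm : ∀ i : Fin m, (C (β i) * g1 z i + C (conj (β i)) * g2 z i
          - C (β i) * g3 z i - C (conj (β i)) * g4 z i).degree < ((4 * m : ℕ) : WithBot ℕ) := by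
        intro i
        have hm1 : 1 ≤ m := i.pos
        have hd : ∀ q : Polynomial ℂ, q.Monic → q.natDegree = 4 * m - 1 →
            ∀ a : ℂ, (C a * q).degree < ((4 * m : ℕ) : WithBot ℕ) := by
          intro q hq hqd a
          calc (C a * q).degree ≤ q.degree := by
                calc (C a * q).degree ≤ (C a).degree + q.degree := degree_mul_le _ _
                _ ≤ 0 + q.degree := add_le_add degree_C_le le_rfl
                _ = q.degree := zero_add _
          _ = ((4 * m - 1 : ℕ) : WithBot ℕ) := by rw [degree_eq_natDegree hq.ne_zero, hqd]
          _ < ((4 * m : ℕ) : WithBot ℕ) := by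
                rw [Nat.cast_lt]; omega
        calc (C (β i) * g1 z i + C (conj (β i)) * g2 z i - C (β i) * g3 z i
              - C (conj (β i)) * g4 z i).degree
            ≤ max (max (max (C (β i) * g1 z i).degree (C (conj (β i)) * g2 z i).degree)
                (C (β i) * g3 z i).degree) (C (conj (β i)) * g4 z i).degree := by
              refine le_trans (degree_sub_le _ _) ?_
              exact max_le_max (le_trans (degree_sub_le _ _)
                (max_le_max (degree_add_le _ _) le_rfl)) le_rfl
        _ < ((4 * m : ℕ) : WithBot ℕ) := by
              refine max_lt (max_lt (max_lt ?_ ?_) ?_) ?_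
              · exact hd _ (gp_monic z i _ _ _) (gp_natDegree z i _ _ _) _
              · exact hd _ (gp_monic z i _ _ _) (gp_natDegree z i _ _ _) _
              · exact hd _ (gp_monic z i _ _ _) (gp_natDegree z i _ _ _) _
              · exact hd _ (gp_monic z i _ _ _) (gp_natDegree z i _ _ _) _
      calc (numer z β).degree ≤ Finset.univ.sup (fun i : Fin m => (C (β i) * g1 z i
            + C (conj (β i)) * g2 z i - C (β i) * g3 z i - C (conj (β i)) * g4 z i).degree) :=
            degree_sum_le _ _
      _ < ((4 * m : ℕ) : WithBot ℕ) := by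
            rw [Finset.sup_lt_iff (WithBot.bot_lt_coe _)]
            exact fun i _ => hterm i
    · intro x
      have heval : ((p.eval x : ℝ) : ℂ) = (numer z β).eval (x : ℂ) := by
        rw [← hp_map]
        rw [Polynomial.eval_map]
        exact (Polynomial.eval₂_at_apply (algebraMap ℝ ℂ) x).symm
      rw [heval, ratFilter, numer, Finset.mul_sum, Polynomial.eval_finset_sum]
      refine Finset.sum_congr rfl fun i _ => ?_
      have e1 : (denomPoly m z).eval (x : ℂ) = ((x : ℂ) - z i) * (g1 z i).eval (x : ℂ) := by
        rw [← hq1 z i]; simp [eval_mul]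
      have e2 : (denomPoly m z).eval (x : ℂ) = ((x : ℂ) - conj (z i)) * (g2 z i).eval (x : ℂ) := by
        rw [← hq2 z i]; simp [eval_mul]
      have e3 : (denomPoly m z).eval (x : ℂ) = ((x : ℂ) + z i) * (g3 z i).eval (x : ℂ) := by
        rw [← hq3 z i]; simp [eval_mul]
      have e4 : (denomPoly m z).eval (x : ℂ) = ((x : ℂ) + conj (z i)) * (g4 z i).eval (x : ℂ) := by
        rw [← hq4 z i]; simp [eval_mul]
      have n1 : (x : ℂ) - z i ≠ 0 := sub_ne _ (hz i) x
      have n2 : (x : ℂ) - conj (z i) ≠ 0 := sub_ne _ (by simpa using hz i) x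
      have n3 : (x : ℂ) + z i ≠ 0 := add_ne _ (hz i) x
      have n4 : (x : ℂ) + conj (z i) ≠ 0 := add_ne _ (by simpa using hz i) x
      have t1 : (denomPoly m z).eval (x : ℂ) * (β i / ((x : ℂ) - z i))
          = β i * (g1 z i).eval (x : ℂ) := by
        rw [e1]; field_simp [n1]
      have t2 : (denomPoly m z).eval (x : ℂ) * (conj (β i) / ((x : ℂ) - conj (z i)))
          = conj (β i) * (g2 z i).eval (x : ℂ) := by
        rw [e2]; field_simp [n2]
      have t3 : (denomPoly m z).eval (x : ℂ) * (β i / ((x : ℂ) + z i))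
          = β i * (g3 z i).eval (x : ℂ) := by
        rw [e3]; field_simp [n3]
      have t4 : (denomPoly m z).eval (x : ℂ) * (conj (β i) / ((x : ℂ) + conj (z i)))
          = conj (β i) * (g4 z i).eval (x : ℂ) := by
        rw [e4]; field_simp [n4]
      rw [mul_sub, mul_sub, mul_add, t1, t2, t3, t4]
      simp only [eval_add, eval_sub, eval_mul, eval_C]
end

section
/- Minimizers of the worst-case convergence rate transfer under scaling: let G ∈ (0,1) and m ∈ ℕ, and let A = { (β', z') ∈ ℂ^m × ℂ^m : Im(z'_i) ≠ 0 for all i } be the admissible parameter set. If (β, z) ∈ A satisfies w_{√G}(r_{β,z}) ≤ w_{√G}(r_{β',z'}) for all (β', z') ∈ A, then the scaled parameters (√(G⁻¹)β, √(G⁻¹)z) ∈ A satisfy W_G(r_{√(G⁻¹)β, √(G⁻¹)z}) ≤ W_G(r_{β',z'}) for all (β', z') ∈ A. -/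
open Complex ComplexConjugate

/-- `S(G,f)`: supremum of `|f|` over the exterior region `{x : |x| ≥ G⁻¹}`. -/
noncomputable def supExterior (G : ℝ) (f : ℝ → ℂ) : ℝ :=
  sSup {y : ℝ | ∃ x : ℝ, G⁻¹ ≤ |x| ∧ y = ‖f x‖}

/-- The worst-case convergence rate `w_G(f) = S/I` with `I` the infimum of `|f|` on `[−G,G]`. -/
noncomputable def wcr (G : ℝ) (f : ℝ → ℂ) : ℝ :=
  supExterior G f / sInf {y : ℝ | ∃ x ∈ Set.Icc (-G) G, y = ‖f x‖}

/-- The modified worst-case objective `W_G(f) = S/J` with `J` the infimum of `|f|` on `[−1,1]`. -/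
noncomputable def wcrMod (G : ℝ) (f : ℝ → ℂ) : ℝ :=
  supExterior G f / sInf {y : ℝ | ∃ x ∈ Set.Icc (-1 : ℝ) 1, y = ‖f x‖}

lemma ratFilter_smul (m : ℕ) (β z : Fin m → ℂ) (c : ℝ) (hc : c ≠ 0) (x : ℝ) :
    ratFilter m (fun i => (c : ℂ) * β i) (fun i => (c : ℂ) * z i) x
      = ratFilter m β z (x / c) := by
  unfold ratFilter
  refine Finset.sum_congr rfl fun i _ => ?_
  have hc' : (c : ℂ) ≠ 0 := by exact_mod_cast hc
  have h1 : ((x / c : ℝ) : ℂ) = (x : ℂ) / c := by push_cast; ring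
  simp only [map_mul, Complex.conj_ofReal, h1]
  have e1 : (x : ℂ) - (c : ℂ) * z i = (c : ℂ) * ((x : ℂ) / c - z i) := by field_simp
  have e2 : (x : ℂ) - (c : ℂ) * conj (z i) = (c : ℂ) * ((x : ℂ) / c - conj (z i)) := by field_simp
  have e3 : (x : ℂ) + (c : ℂ) * z i = (c : ℂ) * ((x : ℂ) / c + z i) := by field_simp
  have e4 : (x : ℂ) + (c : ℂ) * conj (z i) = (c : ℂ) * ((x : ℂ) / c + conj (z i)) := by
    field_simp
  rw [e1, e2, e3, e4, mul_div_mul_left _ _ hc', mul_div_mul_left _ _ hc',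
    mul_div_mul_left _ _ hc', mul_div_mul_left _ _ hc']

lemma setS_eq (G c : ℝ) (hc : 0 < c) (f : ℝ → ℂ) :
    {y : ℝ | ∃ x : ℝ, G⁻¹ ≤ |x| ∧ y = ‖f (x / c)‖} =
    {y : ℝ | ∃ x : ℝ, (G * c)⁻¹ ≤ |x| ∧ y = ‖f x‖} := by
  have key : c * (G * c)⁻¹ = G⁻¹ := by
    rw [mul_inv, mul_comm G⁻¹, ← mul_assoc, mul_inv_cancel₀ hc.ne', one_mul]
  ext y
  constructor
  · rintro ⟨x, hx, rfl⟩
    refine ⟨x / c, ?_, rfl⟩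
    rw [abs_div, abs_of_pos hc, mul_inv, div_eq_mul_inv]
    gcongr
  · rintro ⟨x, hx, rfl⟩
    refine ⟨c * x, ?_, by rw [mul_comm, mul_div_assoc, div_self hc.ne', mul_one]⟩
    rw [abs_mul, abs_of_pos hc, ← key]
    gcongr

lemma setI_eq (a c : ℝ) (hc : 0 < c) (f : ℝ → ℂ) :
    {y : ℝ | ∃ x ∈ Set.Icc (-a) a, y = ‖f (x / c)‖} =
    {y : ℝ | ∃ x ∈ Set.Icc (-(a / c)) (a / c), y = ‖f x‖} := by
  have hca : c * (a / c) = a := by field_simp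
  ext y
  constructor
  · rintro ⟨x, ⟨h1, h2⟩, rfl⟩
    exact ⟨x / c, ⟨by rw [← neg_div]; gcongr, by gcongr⟩, rfl⟩
  · rintro ⟨x, ⟨h1, h2⟩, rfl⟩
    refine ⟨c * x, ⟨?_, ?_⟩, by rw [mul_comm, mul_div_assoc, div_self hc.ne', mul_one]⟩
    · have := mul_le_mul_of_nonneg_left h1 hc.le
      rwa [mul_neg, hca] at this
    · have := mul_le_mul_of_nonneg_left h2 hc.le
      rwa [hca] at this

lemma wcrMod_scale (G : ℝ) (hG : 0 < G) (f : ℝ → ℂ) :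
    wcrMod G (fun x => f (x / (Real.sqrt G)⁻¹)) = wcr (Real.sqrt G) f := by
  have hs : 0 < Real.sqrt G := Real.sqrt_pos.2 hG
  have hc : 0 < (Real.sqrt G)⁻¹ := inv_pos.2 hs
  unfold wcrMod wcr supExterior
  rw [setS_eq G _ hc f, setI_eq 1 _ hc f]
  have h1 : G * (Real.sqrt G)⁻¹ = Real.sqrt G := by
    field_simp
    rw [Real.sq_sqrt hG.le]
  have h2 : (1 : ℝ) / (Real.sqrt G)⁻¹ = Real.sqrt G := by
    rw [one_div, inv_inv]
  rw [h1, h2]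

lemma wcr_scale (G : ℝ) (hG : 0 < G) (f : ℝ → ℂ) :
    wcr (Real.sqrt G) (fun x => f (x / Real.sqrt G)) = wcrMod G f := by
  have hs : 0 < Real.sqrt G := Real.sqrt_pos.2 hG
  unfold wcrMod wcr supExterior
  rw [setS_eq _ _ hs f, setI_eq _ _ hs f]
  rw [Real.mul_self_sqrt hG.le, div_self hs.ne']

/-- Minimizers of the worst-case convergence rate transfer under scaling: if `(β, z)` is an
admissible minimizer of `w_{√G}` over the admissible set `A`, then the scaled parameters
`(√(G⁻¹)β, √(G⁻¹)z)` are admissible and minimize `W_G` over `A`. -/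
theorem wcrMod_minimizer_of_wcr_minimizer (G : ℝ) (hG : G ∈ Set.Ioo (0 : ℝ) 1) (m : ℕ)
    (A : Set ((Fin m → ℂ) × (Fin m → ℂ)))
    (hA : A = {p : (Fin m → ℂ) × (Fin m → ℂ) | ∀ i, (p.2 i).im ≠ 0})
    (β z : Fin m → ℂ) (hmem : (β, z) ∈ A)
    (hmin : ∀ p ∈ A, wcr (Real.sqrt G) (ratFilter m β z) ≤ wcr (Real.sqrt G) (ratFilter m p.1 p.2)) :
    ((fun i => (Real.sqrt (G⁻¹) : ℂ) * β i), (fun i => (Real.sqrt (G⁻¹) : ℂ) * z i)) ∈ A ∧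
    ∀ p ∈ A,
      wcrMod G (ratFilter m (fun i => (Real.sqrt (G⁻¹) : ℂ) * β i)
          (fun i => (Real.sqrt (G⁻¹) : ℂ) * z i)) ≤
        wcrMod G (ratFilter m p.1 p.2) := by
  obtain ⟨hG0, hG1⟩ := hG
  have hs : 0 < Real.sqrt G := Real.sqrt_pos.2 hG0
  have hsi : 0 < Real.sqrt G⁻¹ := Real.sqrt_pos.2 (inv_pos.2 hG0)
  have hz : (β, z) ∈ {p : (Fin m → ℂ) × (Fin m → ℂ) | ∀ i, (p.2 i).im ≠ 0} := hA ▸ hmem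
  subst hA
  constructor
  · intro i
    simp only [Complex.mul_im, Complex.ofReal_re, Complex.ofReal_im, zero_mul, add_zero]
    exact mul_ne_zero hsi.ne' (hz i)
  · intro p hp
    have hinv : Real.sqrt G⁻¹ = (Real.sqrt G)⁻¹ := Real.sqrt_inv G
    have key1 : wcrMod G (ratFilter m (fun i => (Real.sqrt (G⁻¹) : ℂ) * β i)
        (fun i => (Real.sqrt (G⁻¹) : ℂ) * z i)) = wcr (Real.sqrt G) (ratFilter m β z) := by
      rw [← wcrMod_scale G hG0 (ratFilter m β z)]
      congr 1
      funext x
      rw [← hinv]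
      exact ratFilter_smul m β z _ hsi.ne' x
    set q : (Fin m → ℂ) × (Fin m → ℂ) :=
      (fun i => (Real.sqrt G : ℂ) * p.1 i, fun i => (Real.sqrt G : ℂ) * p.2 i) with hq
    have hqA : q ∈ {p : (Fin m → ℂ) × (Fin m → ℂ) | ∀ i, (p.2 i).im ≠ 0} := by
      intro i
      simp only [hq, Complex.mul_im, Complex.ofReal_re, Complex.ofReal_im, zero_mul, add_zero]
      exact mul_ne_zero hs.ne' (hp i)
    have key2 : wcr (Real.sqrt G) (ratFilter m q.1 q.2) = wcrMod G (ratFilter m p.1 p.2) := by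
      rw [← wcr_scale G hG0 (ratFilter m p.1 p.2)]
      congr 1
      funext x
      exact ratFilter_smul m p.1 p.2 _ hs.ne' x
    rw [key1, ← key2]
    exact hmin q hqA
end
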